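/- If the Set endofunctor F preserves wide (small) pushouts of epimorphisms, then every (F,B)-dialgebra has a bisimilarity quotient, i.e., the wide pushout in Dialg(F,B) of the cone of all its quotients exists. -/

import Mathlib

open CategoryTheory

universe u

/-- An (F,B)-dialgebra: a set together with a map `F X → B X`. -/
structure Dialgebra (F B : Type u ⥤ Type u) where
  carrier : Type u
  str : F.obj carrier → B.obj carrier

/-- A dialgebra homomorphism: `g ∘ F h = B h ∘ f`. -/
def IsDialgHom {F B : Type u ⥤ Type u} (X Y : Dialgebra F B)
    (h : X.carrier → Y.carrier) : Prop :=
  Y.str ∘ F.map (TypeCat.ofHom h) = B.map (TypeCat.ofHom h) ∘ X.str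

/-- The quotients of a dialgebra `(X,f)`, indexed by setoids on the carrier
together with a dialgebra structure on the quotient set making the projection a
homomorphism. -/
def QuotObj {F B : Type u ⥤ Type u} (X : Dialgebra F B) : Type u :=
  Σ s : Setoid X.carrier,
    { g : F.obj (_root_.Quotient s) → B.obj (_root_.Quotient s) //
      IsDialgHom X ⟨_root_.Quotient s, g⟩ (Quotient.mk s) }

/-- If `F` preserves wide (small) pushouts of epimorphisms — i.e. for every small
family of surjections out of a set, `F` maps the canonical wide-pushout cocone in
`Set` to a colimiting cocone — then every `(F,B)`-dialgebra has a bisimilarity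
quotient: the wide pushout in `Dialg(F,B)` of the cone of all its quotients
exists. -/
theorem bisimilarity_quotient_exists (F B : Type u ⥤ Type u)
    (hF : ∀ (X₀ I : Type u) (Y : I → Type u) (h : ∀ i, X₀ → Y i),
      (∀ i, Function.Surjective (h i)) →
      ∀ u : ∀ i, Y i → Quot (fun a b : X₀ => ∃ i, h i a = h i b),
        (∀ i, u i ∘ h i = Quot.mk _) →
        ∀ (W : Type u) (k₀ : F.obj X₀ → W) (k : ∀ i, F.obj (Y i) → W),
          (∀ i, k i ∘ F.map (TypeCat.ofHom (h i)) = k₀) →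
          ∃! v : F.obj (Quot (fun a b : X₀ => ∃ i, h i a = h i b)) → W,
            v ∘ F.map (TypeCat.ofHom (Quot.mk _)) = k₀ ∧ ∀ i, v ∘ F.map (TypeCat.ofHom (u i)) = k i) :
    ∀ X : Dialgebra F B,
      ∃ (Q : Dialgebra F B) (z : X.carrier → Q.carrier)
        (leg : ∀ p : QuotObj X, _root_.Quotient p.1 → Q.carrier),
        IsDialgHom X Q z ∧
        (∀ p : QuotObj X,
          IsDialgHom ⟨_root_.Quotient p.1, p.2.1⟩ Q (leg p) ∧
          leg p ∘ Quotient.mk p.1 = z) ∧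
        -- universal property of the wide pushout
        (∀ (W : Dialgebra F B) (w : X.carrier → W.carrier)
           (wleg : ∀ p : QuotObj X, _root_.Quotient p.1 → W.carrier),
          IsDialgHom X W w →
          (∀ p : QuotObj X,
            IsDialgHom ⟨_root_.Quotient p.1, p.2.1⟩ W (wleg p) ∧
            wleg p ∘ Quotient.mk p.1 = w) →
          ∃! v : Q.carrier → W.carrier,
            IsDialgHom Q W v ∧ v ∘ z = w ∧ ∀ p, v ∘ leg p = wleg p) := by
  intro X
  classical
  let I := QuotObj X
  let h : ∀ p : I, X.carrier → _root_.Quotient p.1 := fun p => Quotient.mk p.1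
  have hsurj : ∀ p : I, Function.Surjective (h p) := fun p q => ⟨q.out, q.out_eq⟩
  let R : X.carrier → X.carrier → Prop := fun a b => ∃ p : I, h p a = h p b
  let Qc := Quot R
  let z : X.carrier → Qc := Quot.mk R
  let uu : ∀ p : I, _root_.Quotient p.1 → Qc := fun p =>
    Quotient.lift (Quot.mk R) (fun a b hab => Quot.sound ⟨p, Quotient.sound hab⟩)
  have hu : ∀ p : I, uu p ∘ h p = Quot.mk R := fun p => rfl
  have mapcomp : ∀ (G : Type u ⥤ Type u) {A C D : Type u} (f : A → C) (g : C → D),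
      G.map (TypeCat.ofHom (g ∘ f)) = G.map (TypeCat.ofHom g) ∘ G.map (TypeCat.ofHom f) := by
    intro G A C D f g
    funext x
    exact FunctorToTypes.map_comp_apply G (TypeCat.ofHom f) (TypeCat.ofHom g) x
  have hk : ∀ p : I, (B.map (TypeCat.ofHom (uu p)) ∘ p.2.1) ∘ F.map (TypeCat.ofHom (h p)) = B.map (TypeCat.ofHom z) ∘ X.str := by
    intro p
    have hp : p.2.1 ∘ F.map (TypeCat.ofHom (h p)) = B.map (TypeCat.ofHom (h p)) ∘ X.str := p.2.2
    calc (B.map (TypeCat.ofHom (uu p)) ∘ p.2.1) ∘ F.map (TypeCat.ofHom (h p))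
        = B.map (TypeCat.ofHom (uu p)) ∘ (p.2.1 ∘ F.map (TypeCat.ofHom (h p))) := rfl
      _ = B.map (TypeCat.ofHom (uu p)) ∘ (B.map (TypeCat.ofHom (h p)) ∘ X.str) := by rw [hp]
      _ = (B.map (TypeCat.ofHom (uu p)) ∘ B.map (TypeCat.ofHom (h p))) ∘ X.str := rfl
      _ = B.map (TypeCat.ofHom (uu p ∘ h p)) ∘ X.str := by rw [mapcomp B (h p) (uu p)]
      _ = B.map (TypeCat.ofHom z) ∘ X.str := rfl
  obtain ⟨g, ⟨hg0, hgl⟩, hguniq⟩ :=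
    hF X.carrier I _ h hsurj uu hu (B.obj Qc) (B.map (TypeCat.ofHom z) ∘ X.str)
      (fun p => B.map (TypeCat.ofHom (uu p)) ∘ p.2.1) hk
  refine ⟨⟨Qc, g⟩, z, uu, hg0, fun p => ⟨hgl p, rfl⟩, ?_⟩
  intro W w wleg hw hwleg
  have sound : ∀ a b, R a b → w a = w b := by
    rintro a b ⟨p, hab⟩
    have e := (hwleg p).2
    calc w a = wleg p (h p a) := (congrFun e a).symm
      _ = wleg p (h p b) := by rw [hab]
      _ = w b := congrFun e b
  let v : Qc → W.carrier := Quot.lift w sound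
  have hvz : v ∘ z = w := rfl
  have hvleg : ∀ p, v ∘ uu p = wleg p := by
    intro p; funext q
    induction q using Quotient.ind with
    | _ a => exact (congrFun (hwleg p).2 a).symm
  have hk' : ∀ p : I, (B.map (TypeCat.ofHom (wleg p)) ∘ p.2.1) ∘ F.map (TypeCat.ofHom (h p)) = B.map (TypeCat.ofHom w) ∘ X.str := by
    intro p
    have hp : p.2.1 ∘ F.map (TypeCat.ofHom (h p)) = B.map (TypeCat.ofHom (h p)) ∘ X.str := p.2.2
    calc (B.map (TypeCat.ofHom (wleg p)) ∘ p.2.1) ∘ F.map (TypeCat.ofHom (h p))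
        = B.map (TypeCat.ofHom (wleg p)) ∘ (p.2.1 ∘ F.map (TypeCat.ofHom (h p))) := rfl
      _ = B.map (TypeCat.ofHom (wleg p)) ∘ (B.map (TypeCat.ofHom (h p)) ∘ X.str) := by rw [hp]
      _ = (B.map (TypeCat.ofHom (wleg p)) ∘ B.map (TypeCat.ofHom (h p))) ∘ X.str := rfl
      _ = B.map (TypeCat.ofHom (wleg p ∘ h p)) ∘ X.str := by rw [mapcomp B (h p) (wleg p)]
      _ = B.map (TypeCat.ofHom w) ∘ X.str := by rw [(hwleg p).2]
  obtain ⟨v₀, _, hv₀uniq⟩ :=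
    hF X.carrier I _ h hsurj uu hu (B.obj W.carrier) (B.map (TypeCat.ofHom w) ∘ X.str)
      (fun p => B.map (TypeCat.ofHom (wleg p)) ∘ p.2.1) hk'
  have e1 : W.str ∘ F.map (TypeCat.ofHom v) = v₀ := by
    apply hv₀uniq
    constructor
    · calc (W.str ∘ F.map (TypeCat.ofHom v)) ∘ F.map (TypeCat.ofHom (Quot.mk _))
          = W.str ∘ (F.map (TypeCat.ofHom v) ∘ F.map (TypeCat.ofHom z)) := rfl
        _ = W.str ∘ F.map (TypeCat.ofHom (v ∘ z)) := by rw [mapcomp F z v]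
        _ = W.str ∘ F.map (TypeCat.ofHom w) := by rw [hvz]
        _ = B.map (TypeCat.ofHom w) ∘ X.str := hw
    · intro p
      calc (W.str ∘ F.map (TypeCat.ofHom v)) ∘ F.map (TypeCat.ofHom (uu p))
          = W.str ∘ (F.map (TypeCat.ofHom v) ∘ F.map (TypeCat.ofHom (uu p))) := rfl
        _ = W.str ∘ F.map (TypeCat.ofHom (v ∘ uu p)) := by rw [mapcomp F (uu p) v]
        _ = W.str ∘ F.map (TypeCat.ofHom (wleg p)) := by rw [hvleg p]
        _ = B.map (TypeCat.ofHom (wleg p)) ∘ p.2.1 := (hwleg p).1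
  have e2 : B.map (TypeCat.ofHom v) ∘ g = v₀ := by
    apply hv₀uniq
    constructor
    · calc (B.map (TypeCat.ofHom v) ∘ g) ∘ F.map (TypeCat.ofHom (Quot.mk _))
          = B.map (TypeCat.ofHom v) ∘ (g ∘ F.map (TypeCat.ofHom z)) := rfl
        _ = B.map (TypeCat.ofHom v) ∘ (B.map (TypeCat.ofHom z) ∘ X.str) := by rw [hg0]
        _ = (B.map (TypeCat.ofHom v) ∘ B.map (TypeCat.ofHom z)) ∘ X.str := rfl
        _ = B.map (TypeCat.ofHom (v ∘ z)) ∘ X.str := by rw [mapcomp B z v]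
        _ = B.map (TypeCat.ofHom w) ∘ X.str := by rw [hvz]
    · intro p
      calc (B.map (TypeCat.ofHom v) ∘ g) ∘ F.map (TypeCat.ofHom (uu p))
          = B.map (TypeCat.ofHom v) ∘ (g ∘ F.map (TypeCat.ofHom (uu p))) := rfl
        _ = B.map (TypeCat.ofHom v) ∘ (B.map (TypeCat.ofHom (uu p)) ∘ p.2.1) := by rw [hgl p]
        _ = (B.map (TypeCat.ofHom v) ∘ B.map (TypeCat.ofHom (uu p))) ∘ p.2.1 := rfl
        _ = B.map (TypeCat.ofHom (v ∘ uu p)) ∘ p.2.1 := by rw [mapcomp B (uu p) v]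
        _ = B.map (TypeCat.ofHom (wleg p)) ∘ p.2.1 := by rw [hvleg p]
  refine ⟨v, ⟨e1.trans e2.symm, hvz, hvleg⟩, ?_⟩
  rintro v₂ ⟨_, hv₂z, _⟩
  funext q
  induction q using Quot.ind with
  | _ a => exact (congrFun hv₂z a).trans (congrFun hvz a).symm
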